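/- (Value of the leaving row at the new basic solution.) Assume a_p = ∑ j, y_p j • a j with y_p q ≠ 0, that x satisfies a j ⬝ᵥ x = b j for all j : Fin d, and that x' satisfies a_p ⬝ᵥ x' = b_p and a j ⬝ᵥ x' = b j for all j ≠ q. Then a q ⬝ᵥ x' = (1 / y_p q) * (b_p − a_p ⬝ᵥ x) + b q. In particular, if y_p q > 0 and a_p ⬝ᵥ x < b_p, then a q ⬝ᵥ x' > b q. -/

import Mathlib

open Matrix

theorem facet_leaving_value (d : ℕ)
    (a : Fin d → Fin d → ℝ) (b : Fin d → ℝ) (q : Fin d)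
    (a_p : Fin d → ℝ) (b_p : ℝ) (y_p : Fin d → ℝ)
    (hap : a_p = ∑ j, y_p j • a j) (hq : y_p q ≠ 0)
    (x x' : Fin d → ℝ)
    (hx : ∀ j, a j ⬝ᵥ x = b j)
    (hx'p : a_p ⬝ᵥ x' = b_p)
    (hx' : ∀ j, j ≠ q → a j ⬝ᵥ x' = b j) :
    a q ⬝ᵥ x' = (1 / y_p q) * (b_p - a_p ⬝ᵥ x) + b q ∧
    (y_p q > 0 → a_p ⬝ᵥ x < b_p → a q ⬝ᵥ x' > b q) := by
  have hdp : ∀ v : Fin d → ℝ, a_p ⬝ᵥ v = ∑ j, y_p j * (a j ⬝ᵥ v) := by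
    intro v
    simp only [hap, dotProduct, Finset.sum_apply, Pi.smul_apply, smul_eq_mul,
      Finset.sum_mul, Finset.mul_sum, mul_assoc]
    exact Finset.sum_comm
  have h1 : b_p = y_p q * (a q ⬝ᵥ x') + ∑ j ∈ Finset.univ.erase q, y_p j * b j := by
    rw [← hx'p, hdp, ← Finset.add_sum_erase _ _ (Finset.mem_univ q)]
    congr 1
    exact Finset.sum_congr rfl fun j hj => by rw [hx' j (Finset.ne_of_mem_erase hj)]
  have h2 : a_p ⬝ᵥ x = y_p q * b q + ∑ j ∈ Finset.univ.erase q, y_p j * b j := by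
    rw [hdp, ← Finset.add_sum_erase _ _ (Finset.mem_univ q), hx q]
    congr 1
    exact Finset.sum_congr rfl fun j _ => by rw [hx j]
  have key : b_p - a_p ⬝ᵥ x = y_p q * (a q ⬝ᵥ x' - b q) := by
    rw [h1, h2]; ring
  have hmain : a q ⬝ᵥ x' = (1 / y_p q) * (b_p - a_p ⬝ᵥ x) + b q := by
    rw [key]; field_simp; ring
  refine ⟨hmain, fun hpos hlt => ?_⟩
  rw [hmain]
  have : (1 / y_p q) * (b_p - a_p ⬝ᵥ x) > 0 :=
    mul_pos (by positivity) (by linarith)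
  linarith
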